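/- Let φ_1,...,φ_n ∈ ℂ be nonzero and pairwise distinct, and r = Σ_{i≠j} (1/(φ_i-φ_j)) (φ_i e^i_j - φ_j e^j_j) ⊗ (e^j_i - e^i_i). Then r + r_{21} = P - Id, where r_{21} is r with the two tensor factors swapped and P is the permutation (flip) operator on ℂ^n⊗ℂ^n. -/

import Mathlib

open Matrix Kronecker BigOperators Finset

noncomputable section


/-- The classical r-matrix `r = Σ_{i≠j} (φ_i-φ_j)⁻¹ (φ_i e^i_j - φ_j e^j_j) ⊗ (e^j_i - e^i_i)`,
viewed as an operator on ℂⁿ⊗ℂⁿ via the Kronecker product. -/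
def rPhi (n : ℕ) (φ : Fin n → ℂ) : Matrix (Fin n × Fin n) (Fin n × Fin n) ℂ :=
  ∑ i : Fin n, ∑ j : Fin n, if i ≠ j then
    (φ i - φ j)⁻¹ • ((φ i • single i j (1:ℂ) - φ j • single j j (1:ℂ)) ⊗ₖ
      (single j i (1:ℂ) - single i i (1:ℂ))) else 0

/-- The flip (permutation) operator `P(x⊗y) = y⊗x` on ℂⁿ⊗ℂⁿ. -/
def flipP (n : ℕ) : Matrix (Fin n × Fin n) (Fin n × Fin n) ℂ := fun p q =>
  if p.1 = q.2 ∧ p.2 = q.1 then 1 else 0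

/-- For `r = Σ aₛ ⊗ bₛ`, the element `r₂₁ = Σ bₛ ⊗ aₛ`, i.e. the matrix with the two tensor
factors swapped. -/
def swap21 {n : ℕ} (r : Matrix (Fin n × Fin n) (Fin n × Fin n) ℂ) :
    Matrix (Fin n × Fin n) (Fin n × Fin n) ℂ := fun p q => r (p.2, p.1) (q.2, q.1)

lemma rPhi_apply (n : ℕ) (φ : Fin n → ℂ) (a b c d : Fin n) :
    rPhi n φ (a, b) (c, d) =
      if d ≠ c then
        (φ d - φ c)⁻¹ * ((φ d * (if d = a then 1 else 0) - φ c * (if c = a then 1 else 0)) *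
          ((if c = b then 1 else 0) - (if d = b then 1 else 0)))
      else 0 := by
  unfold rPhi
  rw [Matrix.sum_apply]
  rw [Finset.sum_eq_single d ?h1 (by simp)]
  · rw [Matrix.sum_apply]
    rw [Finset.sum_eq_single c ?h2 (by simp)]
    · by_cases h : d ≠ c
      · rw [if_pos h, if_pos h]
        simp only [Matrix.smul_apply, Matrix.sub_apply, Matrix.kroneckerMap_apply,
          Matrix.single, Matrix.of_apply, smul_eq_mul, and_true, mul_one]
      · rw [if_neg h, if_neg h]
        simp
    · intro j _ hj
      by_cases h : d ≠ j
      · rw [if_pos h]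
        simp [Matrix.kroneckerMap_apply, Matrix.single, Matrix.of_apply, Matrix.smul_apply,
          Matrix.sub_apply, hj]
      · rw [if_neg h]; simp
  · intro i _ hi
    rw [Matrix.sum_apply]
    apply Finset.sum_eq_zero
    intro j _
    by_cases h : i ≠ j
    · rw [if_pos h]
      simp [Matrix.kroneckerMap_apply, Matrix.single, Matrix.of_apply, Matrix.smul_apply,
        Matrix.sub_apply, hi]
    · rw [if_neg h]; simp

/-- `r + r₂₁ = P - Id` for the rime r-matrix. -/
theorem rPhi_add_swap (n : ℕ) (φ : Fin n → ℂ)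
    (h0 : ∀ i, φ i ≠ 0) (hd : ∀ i j, i ≠ j → φ i ≠ φ j) :
    rPhi n φ + swap21 (rPhi n φ) = flipP n - 1 := by
  ext ⟨a, b⟩ ⟨c, d⟩
  simp only [Matrix.add_apply, Matrix.sub_apply, swap21, flipP, rPhi_apply,
    Matrix.one_apply, Prod.mk.injEq]
  by_cases hdc : d = c
  · subst hdc
    simp [and_comm]
  · have hne : φ d - φ c ≠ 0 := sub_ne_zero.mpr (hd d c hdc)
    have hne' : φ c - φ d ≠ 0 := sub_ne_zero.mpr (hd c d (Ne.symm hdc))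
    rw [if_pos hdc, if_pos (Ne.symm hdc)]
    by_cases h1 : a = d <;> by_cases h2 : a = c <;> by_cases h3 : b = c <;>
      by_cases h4 : b = d <;>
      simp_all [eq_comm] <;> field_simp <;> ring
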